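/- Let P be a probability measure on a measurable space Ω, r a probability measure on a measurable space Δ, A ⊆ Ω × Δ a measurable set, and ρ ∈ [0,1). Then the probabilistically robust risk under the 0-1 loss is an ordinary expected risk: ∫_Ω ( ρ-esssup_{δ∼r} 1_A(ω,δ) ) dP(ω) = P({ ω : r({δ : (ω,δ) ∈ A}) > ρ }). -/

import Mathlib

open MeasureTheory
open scoped ENNReal

/-- The `ρ`-essential supremum of `f` w.r.t. the measure `p`:
`ρ-esssup_p f = inf { u : ℝ | p {x | f x > u} ≤ ρ }`. -/
noncomputable def rhoEssSup {Ω : Type*} [MeasurableSpace Ω] (p : Measure Ω) (f : Ω → ℝ)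
    (ρ : ℝ≥0∞) : ℝ :=
  sInf {u : ℝ | p {x | f x > u} ≤ ρ}

lemma rhoEssSup_indicator_eq_ite {Δ : Type*} [MeasurableSpace Δ]
    (r : Measure Δ) [IsProbabilityMeasure r] (S : Set Δ) (ρ : ℝ≥0∞) (hρ : ρ < 1) :
    rhoEssSup r (S.indicator fun _ => (1 : ℝ)) ρ = if ρ < r S then 1 else 0 := by
  have huniv : ∀ u : ℝ, u < 0 → {x | S.indicator (fun _ => (1:ℝ)) x > u} = Set.univ := by
    intro u hu
    ext x
    simp only [Set.mem_setOf_eq, Set.mem_univ, iff_true]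
    by_cases hx : x ∈ S <;> simp [Set.indicator, hx] <;> linarith
  by_cases h : ρ < r S
  · have hT : {u : ℝ | r {x | S.indicator (fun _ => (1:ℝ)) x > u} ≤ ρ} = Set.Ici 1 := by
      ext u
      simp only [Set.mem_setOf_eq, Set.mem_Ici]
      constructor
      · intro hu
        by_contra hu1
        push_neg at hu1
        have hsub : S ⊆ {x | S.indicator (fun _ => (1:ℝ)) x > u} := by
          intro x hx; simp [Set.indicator, hx]; linarith
        exact absurd (le_trans (measure_mono hsub) hu) (not_le.mpr h)
      · intro hu
        have : {x | S.indicator (fun _ => (1:ℝ)) x > u} = ∅ := by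
          ext x
          simp only [Set.mem_setOf_eq, Set.mem_empty_iff_false, iff_false, not_lt]
          by_cases hx : x ∈ S <;> simp [Set.indicator, hx] <;> linarith
        simp [this]
    simp [rhoEssSup, hT, h, csInf_Ici]
  · have hT : {u : ℝ | r {x | S.indicator (fun _ => (1:ℝ)) x > u} ≤ ρ} = Set.Ici 0 := by
      ext u
      simp only [Set.mem_setOf_eq, Set.mem_Ici]
      constructor
      · intro hu
        by_contra hu0
        push_neg at hu0
        rw [huniv u hu0] at hu
        rw [measure_univ] at hu
        exact absurd hu (not_le.mpr hρ)
      · intro hu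
        have hsub : {x | S.indicator (fun _ => (1:ℝ)) x > u} ⊆ S := by
          intro x hx
          by_contra hxS
          simp only [Set.mem_setOf_eq, Set.indicator_of_notMem hxS] at hx
          linarith
        exact le_trans (measure_mono hsub) (not_lt.mp h)
    simp [rhoEssSup, hT, h, csInf_Ici]

/-- Under the 0-1 loss, the probabilistically robust risk is an ordinary expected risk:
`∫ ω, (ρ-esssup_{δ∼r} 1_A(ω,δ)) dP(ω) = P {ω | r {δ | (ω,δ) ∈ A} > ρ}`. -/
theorem integral_rhoEssSup_indicator_eq {Ω Δ : Type*} [MeasurableSpace Ω] [MeasurableSpace Δ]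
    (P : Measure Ω) [IsProbabilityMeasure P] (r : Measure Δ) [IsProbabilityMeasure r]
    (A : Set (Ω × Δ)) (hA : MeasurableSet A) (ρ : ℝ≥0∞) (hρ : ρ < 1) :
    ∫ ω, rhoEssSup r (Set.indicator {δ | (ω, δ) ∈ A} fun _ => (1 : ℝ)) ρ ∂P
      = (P {ω | ρ < r {δ | (ω, δ) ∈ A}}).toReal := by
  have hmeas : MeasurableSet {ω | ρ < r {δ | (ω, δ) ∈ A}} := by
    have := measurable_measure_prodMk_left (ν := r) hA
    exact measurableSet_lt measurable_const this
  have heq : ∀ ω, rhoEssSup r (Set.indicator {δ | (ω, δ) ∈ A} fun _ => (1 : ℝ)) ρ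
      = Set.indicator {ω | ρ < r {δ | (ω, δ) ∈ A}} (fun _ => (1:ℝ)) ω := by
    intro ω
    rw [rhoEssSup_indicator_eq_ite r _ ρ hρ]
    by_cases h : ρ < r {δ | (ω, δ) ∈ A} <;> simp [Set.indicator, h]
  rw [integral_congr_ae (Filter.Eventually.of_forall heq), integral_indicator_const _ hmeas]
  simp [measureReal_def]
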